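/- Let T be a generalized hyperbolic operator on a Banach space X with splitting X = M ⊕ N, and let Y denote the closed subspace M + T⁻¹(N). For any uniform homeomorphism R : X → X, the bounded linear map Ψ : U_b(X;Y) → U_b(X) defined by Ψ(φ) = φ ∘ R − T ∘ φ is bijective. -/

import Mathlib

open Filter
open scoped ENNReal NNReal

/-- A uniform limit of uniformly continuous functions is uniformly continuous. -/
lemma uc_of_tendstoUniformly {X E : Type*} [PseudoMetricSpace X] [PseudoMetricSpace E]
    {ι : Type*} {l : Filter ι} [l.NeBot] {F : ι → X → E} {f : X → E}
    (h : TendstoUniformly F f l) (hF : ∀ n, UniformContinuous (F n)) :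
    UniformContinuous f := by
  rw [Metric.uniformContinuous_iff]
  intro ε hε
  have h3 : 0 < ε / 3 := by linarith
  obtain ⟨n, hn⟩ := (Metric.tendstoUniformly_iff.1 h (ε / 3) h3).exists
  obtain ⟨δ, hδ, hδ'⟩ := Metric.uniformContinuous_iff.1 (hF n) (ε / 3) h3
  refine ⟨δ, hδ, fun {a b} hab => ?_⟩
  have h1 := hn a
  have h2 := hn b
  have h4 := hδ' hab
  calc dist (f a) (f b) ≤ dist (f a) (F n a) + dist (F n a) (F n b) + dist (F n b) (f b) :=
        dist_triangle4 _ _ _ _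
    _ < ε / 3 + ε / 3 + ε / 3 := by
        have e1 : dist (f a) (F n a) < ε / 3 := h1
        have e2 : dist (F n b) (f b) < ε / 3 := by rw [dist_comm]; exact h2
        gcongr
    _ = ε := by ring

lemma uc_finset_sum {X E : Type*} [PseudoMetricSpace X] [NormedAddCommGroup E]
    {f : ℕ → X → E} (hf : ∀ n, UniformContinuous (f n)) (s : Finset ℕ) :
    UniformContinuous (fun x => ∑ n ∈ s, f n x) := by
  classical
  induction s using Finset.induction with
  | empty => simpa using uniformContinuous_const
  | insert a s h ih =>
      simp only [Finset.sum_insert h]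
      exact (hf _).add ih

/-- Uniform continuity of a series with summable uniform bounds. -/
lemma uc_tsum {X E : Type*} [PseudoMetricSpace X] [NormedAddCommGroup E] [CompleteSpace E]
    {f : ℕ → X → E} {u : ℕ → ℝ} (hu : Summable u) (hfu : ∀ n x, ‖f n x‖ ≤ u n)
    (hf : ∀ n, UniformContinuous (f n)) :
    UniformContinuous (fun x => ∑' n, f n x) :=
  uc_of_tendstoUniformly (tendstoUniformly_tsum_nat hu hfu)
    (fun N => uc_finset_sum hf (Finset.range N))

/-- Restriction of a continuous linear map to an invariant submodule. -/
def clmRestrict {X : Type*} [NormedAddCommGroup X] [NormedSpace ℂ X]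
    (T : X →L[ℂ] X) (p : Submodule ℂ X) (h : ∀ x ∈ p, T x ∈ p) : p →L[ℂ] p where
  toLinearMap := LinearMap.restrict (T : X →ₗ[ℂ] X) h
  cont := Continuous.subtype_mk (T.continuous.comp continuous_subtype_val) _

@[simp] lemma clmRestrict_apply {X : Type*} [NormedAddCommGroup X] [NormedSpace ℂ X]
    (T : X →L[ℂ] X) (p : Submodule ℂ X) (h : ∀ x ∈ p, T x ∈ p) (x : p) :
    (clmRestrict T p h x : X) = T x := rfl

lemma clmRestrict_coe {X : Type*} [NormedAddCommGroup X] [NormedSpace ℂ X]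
    (T : X →L[ℂ] X) (p : Submodule ℂ X) (h : ∀ x ∈ p, T x ∈ p) :
    ((clmRestrict T p h : p →L[ℂ] p) : p →ₗ[ℂ] p) = LinearMap.restrict (T : X →ₗ[ℂ] X) h := rfl

/-- Solving `f = β + A ∘ f ∘ ρ` by a geometric series when powers of `A` decay. -/
lemma series_solution {X : Type*} [PseudoMetricSpace X] {E : Type*} [NormedAddCommGroup E]
    [NormedSpace ℂ E] [CompleteSpace E] (A : E →L[ℂ] E) {C r : ℝ}
    (hC : 0 < C) (hr0 : 0 ≤ r) (hr1 : r < 1) (hA : ∀ n, ‖A ^ n‖ ≤ C * r ^ n)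
    (ρ : X → X) (hρ : UniformContinuous ρ) (β : X → E) (hβ : UniformContinuous β)
    {Cβ : ℝ} (hCβ0 : 0 ≤ Cβ) (hCβ : ∀ x, ‖β x‖ ≤ Cβ) :
    ∃ f : X → E, UniformContinuous f ∧ (∃ B, ∀ x, ‖f x‖ ≤ B) ∧
      (∀ x, f x = β x + A (f (ρ x))) ∧
      (∀ (p : Submodule ℂ E), IsClosed (p : Set E) → (∀ x, β x ∈ p) →
        (∀ y ∈ p, A y ∈ p) → ∀ x, f x ∈ p) := by
  classical
  set g : ℕ → X → E := fun n x => (A ^ n) (β (ρ^[n] x)) with hg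
  have hρit : ∀ n, UniformContinuous (ρ^[n]) := by
    intro n
    induction n with
    | zero => simpa using uniformContinuous_id
    | succ n ih => rw [Function.iterate_succ]; exact ih.comp hρ
  have hgU : ∀ n, UniformContinuous (g n) := fun n =>
    ((A ^ n).uniformContinuous.comp hβ).comp (hρit n)
  set u : ℕ → ℝ := fun n => C * r ^ n * Cβ with hu
  have hgu : ∀ n x, ‖g n x‖ ≤ u n := by
    intro n x
    calc ‖(A ^ n) (β (ρ^[n] x))‖ ≤ ‖A ^ n‖ * ‖β (ρ^[n] x)‖ := (A ^ n).le_opNorm _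
      _ ≤ (C * r ^ n) * Cβ := mul_le_mul (hA n) (hCβ _) (norm_nonneg _) (by positivity)
  have huS : Summable u := ((summable_geometric_of_lt_one hr0 hr1).mul_left C).mul_right Cβ
  have hsum : ∀ x, Summable fun n => g n x := fun x =>
    Summable.of_norm_bounded huS (fun n => hgu n x)
  have hsumn : ∀ x, Summable fun n => ‖g n x‖ := fun x =>
    huS.of_nonneg_of_le (fun n => norm_nonneg _) (fun n => hgu n x)
  refine ⟨fun x => ∑' n, g n x, uc_tsum huS hgu hgU, ⟨∑' n, u n, fun x => ?_⟩, fun x => ?_, ?_⟩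
  · calc ‖∑' n, g n x‖ ≤ ∑' n, ‖g n x‖ := norm_tsum_le_tsum_norm (hsumn x)
      _ ≤ ∑' n, u n := Summable.tsum_le_tsum (fun n => hgu n x) (hsumn x) huS
  · have h0 : g 0 x = β x := by simp [hg]
    have hstep : ∀ n, g (n + 1) x = A (g n (ρ x)) := by
      intro n
      simp only [hg, pow_succ', ContinuousLinearMap.mul_apply, Function.iterate_succ_apply]
    calc ∑' n, g n x = g 0 x + ∑' n, g (n + 1) x := Summable.tsum_eq_zero_add (hsum x)
      _ = β x + ∑' n, A (g n (ρ x)) := by rw [h0]; congr 1; exact tsum_congr hstep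
      _ = β x + A (∑' n, g n (ρ x)) := by rw [ContinuousLinearMap.map_tsum A (hsum (ρ x))]
  · intro p hpc hβp hAp x
    have hmem : ∀ n y, y ∈ p → (A ^ n) y ∈ p := by
      intro n
      induction n with
      | zero => intro y hy; simpa using hy
      | succ n ih =>
          intro y hy
          rw [pow_succ', ContinuousLinearMap.mul_apply]
          exact hAp _ (ih y hy)
    have hgp : ∀ n, g n x ∈ p := fun n => hmem n _ (hβp _)
    have htend := (hsum x).hasSum.tendsto_sum_nat
    refine hpc.mem_of_tendsto htend (Filter.Eventually.of_forall fun n => ?_)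
    exact Submodule.sum_mem p fun i _ => hgp i

lemma decay_unique {X : Type*} {E : Type*} [NormedAddCommGroup E] [NormedSpace ℂ E]
    (A : E →L[ℂ] E) {C r : ℝ} (hr0 : 0 ≤ r) (hr1 : r < 1)
    (hA : ∀ n, ‖A ^ n‖ ≤ C * r ^ n) (ρ : X → X) (g : X → E) {Cg : ℝ}
    (hCg : ∀ x, ‖g x‖ ≤ Cg) (heq : ∀ x, g x = A (g (ρ x))) : ∀ x, g x = 0 := by
  have hiter : ∀ k x, g x = (A ^ k) (g (ρ^[k] x)) := by
    intro k
    induction k with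
    | zero => intro x; simp
    | succ k ih =>
        intro x
        calc g x = A (g (ρ x)) := heq x
          _ = A ((A ^ k) (g (ρ^[k] (ρ x)))) := by rw [← ih (ρ x)]
          _ = (A ^ (k + 1)) (g (ρ^[k + 1] x)) := by
              rw [pow_succ', ContinuousLinearMap.mul_apply, Function.iterate_succ_apply]
  intro x
  have hb : ∀ k, ‖g x‖ ≤ C * r ^ k * Cg := by
    intro k
    calc ‖g x‖ = ‖(A ^ k) (g (ρ^[k] x))‖ := by rw [← hiter k x]
      _ ≤ ‖A ^ k‖ * ‖g (ρ^[k] x)‖ := (A ^ k).le_opNorm _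
      _ ≤ (C * r ^ k) * Cg := by
          refine mul_le_mul (hA k) (hCg _) (norm_nonneg _) ?_
          exact le_trans (norm_nonneg _) (hA k)
  have htend : Tendsto (fun k : ℕ => C * r ^ k * Cg) atTop (nhds 0) := by
    have := (tendsto_pow_atTop_nhds_zero_of_lt_one hr0 hr1).const_mul C
    simpa using this.mul_const Cg
  have : ‖g x‖ ≤ 0 := ge_of_tendsto' htend hb
  simpa using le_antisymm this (norm_nonneg _)

/-- Spectrum of a continuous linear map on a Banach space is contained in the spectrum of the
underlying linear map (as an element of `Module.End`). -/
lemma spectrum_clm_subset_end {E : Type*} [NormedAddCommGroup E] [NormedSpace ℂ E]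
    [CompleteSpace E] (A : E →L[ℂ] E) :
    spectrum ℂ A ⊆ spectrum ℂ (A : E →ₗ[ℂ] E) := by
  intro z hz
  by_contra hz'
  rw [spectrum.notMem_iff] at hz'
  have hbij : Function.Bijective ⇑(algebraMap ℂ (Module.End ℂ E) z - (A : E →ₗ[ℂ] E)) :=
    (Module.End.isUnit_iff _).1 hz'
  set B : E →L[ℂ] E := algebraMap ℂ (E →L[ℂ] E) z - A with hB
  have hcoe : ⇑B = ⇑(algebraMap ℂ (Module.End ℂ E) z - (A : E →ₗ[ℂ] E)) := by
    ext x
    simp [hB, Module.algebraMap_end_apply, ContinuousLinearMap.algebraMap_apply]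
  have hbijB : Function.Bijective ⇑B := by rw [hcoe]; exact hbij
  have hker : B.ker = ⊥ := (LinearMap.ker_eq_bot (f := (B : E →ₗ[ℂ] E))).2 hbijB.1
  have hrange : B.range = ⊤ := (LinearMap.range_eq_top (f := (B : E →ₗ[ℂ] E))).2 hbijB.2
  let e := ContinuousLinearEquiv.ofBijective B hker hrange
  have hunit : IsUnit B := by
    refine ⟨⟨B, (e.symm : E →L[ℂ] E), ?_, ?_⟩, rfl⟩
    · ext x
      exact e.apply_symm_apply x
    · ext x
      exact e.symm_apply_apply x
  rw [spectrum.mem_iff] at hz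
  exact hz hunit

lemma spectralRadius_lt_one {E : Type*} [NormedAddCommGroup E] [NormedSpace ℂ E]
    [CompleteSpace E] (A : E →L[ℂ] E) (h : spectrum ℂ A ⊆ Metric.ball (0 : ℂ) 1) :
    spectralRadius ℂ A < 1 := by
  rcases Set.eq_empty_or_nonempty (spectrum ℂ A) with he | hne
  · rw [spectralRadius, he]
    simp
  · obtain ⟨k₀, hk₀, hmax⟩ := (spectrum.isCompact A).exists_isMaxOn hne
      (continuous_norm.continuousOn (s := spectrum ℂ A))
    have h1 : spectralRadius ℂ A ≤ ‖k₀‖₊ := by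
      rw [spectralRadius]
      refine iSup₂_le fun k hk => ?_
      exact_mod_cast (hmax hk : ‖k‖ ≤ ‖k₀‖)
    have h2 : (‖k₀‖₊ : ℝ≥0∞) < 1 := by
      have := h hk₀
      rw [Metric.mem_ball, dist_zero_right] at this
      exact_mod_cast this
    exact lt_of_le_of_lt h1 h2

/-- Geometric decay of powers from spectral radius `< 1`. -/
lemma exists_geom_bound {E : Type*} [NormedAddCommGroup E] [NormedSpace ℂ E]
    [CompleteSpace E] (A : E →L[ℂ] E) (h : spectrum ℂ A ⊆ Metric.ball (0 : ℂ) 1) :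
    ∃ C r : ℝ, 0 < C ∧ 0 ≤ r ∧ r < 1 ∧ ∀ n, ‖A ^ n‖ ≤ C * r ^ n := by
  have hrad := spectralRadius_lt_one A h
  obtain ⟨r₀, hr₀, hr₁⟩ := ENNReal.lt_iff_exists_nnreal_btwn.1 hrad
  set r : ℝ≥0 := max r₀ (1/2) with hrdef
  have hrlt : spectralRadius ℂ A < (r : ℝ≥0∞) := lt_of_lt_of_le hr₀ (by
    exact_mod_cast le_max_left _ _)
  have hrpos : (0 : ℝ≥0) < r := lt_of_lt_of_le (by norm_num) (le_max_right _ _)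
  have hr1 : (r : ℝ) < 1 := by
    have h1 : r₀ < (1 : ℝ≥0) := by exact_mod_cast hr₁
    have : r < 1 := max_lt h1 (by exact_mod_cast (by norm_num : ((1:ℝ)/2) < 1))
    exact_mod_cast this
  have htend := spectrum.pow_nnnorm_pow_one_div_tendsto_nhds_spectralRadius A
  have hev : ∀ᶠ n : ℕ in atTop, (‖A ^ n‖₊ : ℝ≥0∞) ^ (1 / (n : ℝ)) < (r : ℝ≥0∞) :=
    htend.eventually_lt_const hrlt
  obtain ⟨N, hN⟩ := hev.exists_forall_of_atTop
  have key : ∀ n, max N 1 ≤ n → ‖A ^ n‖ ≤ (r : ℝ) ^ n := by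
    intro n hn
    have hn1 : 1 ≤ n := le_trans (le_max_right _ _) hn
    have hnN : N ≤ n := le_trans (le_max_left _ _) hn
    have h1 := hN n hnN
    have hne : (n : ℝ) ≠ 0 := by positivity
    have h2 : ((‖A ^ n‖₊ : ℝ≥0∞) ^ (1 / (n : ℝ))) ^ (n : ℝ) ≤ ((r : ℝ≥0∞)) ^ (n : ℝ) :=
      ENNReal.rpow_le_rpow h1.le (by positivity)
    rw [← ENNReal.rpow_mul, one_div, inv_mul_cancel₀ hne, ENNReal.rpow_one,
      ENNReal.rpow_natCast] at h2
    have h3 : (‖A ^ n‖₊ : ℝ≥0∞) ≤ ((r ^ n : ℝ≥0) : ℝ≥0∞) := by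
      rw [ENNReal.coe_pow]
      exact h2
    have h4 : ‖A ^ n‖₊ ≤ r ^ n := by exact_mod_cast h3
    calc ‖A ^ n‖ = (‖A ^ n‖₊ : ℝ) := rfl
      _ ≤ ((r ^ n : ℝ≥0) : ℝ) := by exact_mod_cast h4
      _ = (r : ℝ) ^ n := by push_cast; ring
  set M₀ := max N 1 with hM₀
  set C : ℝ := 1 + ∑ k ∈ Finset.range M₀, ‖A ^ k‖ / (r : ℝ) ^ k with hC
  have hsum0 : (0:ℝ) ≤ ∑ k ∈ Finset.range M₀, ‖A ^ k‖ / (r : ℝ) ^ k :=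
    Finset.sum_nonneg fun k _ => by positivity
  have hC1 : (1:ℝ) ≤ C := by rw [hC]; linarith
  have hCpos : 0 < C := lt_of_lt_of_le one_pos hC1
  refine ⟨C, r, hCpos, r.coe_nonneg, hr1, fun n => ?_⟩
  rcases le_or_gt M₀ n with hn | hn
  · calc ‖A ^ n‖ ≤ (r : ℝ) ^ n := key n hn
      _ = 1 * (r : ℝ) ^ n := (one_mul _).symm
      _ ≤ C * (r : ℝ) ^ n := by gcongr
  · have hrn : (0:ℝ) < (r : ℝ) ^ n := by positivity
    have hmem : n ∈ Finset.range M₀ := Finset.mem_range.2 hn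
    have h5 : ‖A ^ n‖ / (r : ℝ) ^ n ≤ ∑ k ∈ Finset.range M₀, ‖A ^ k‖ / (r : ℝ) ^ k :=
      Finset.single_le_sum (f := fun k => ‖A ^ k‖ / (r : ℝ) ^ k)
        (fun k _ => by positivity) hmem
    have h6 : ‖A ^ n‖ / (r : ℝ) ^ n ≤ C := by
      rw [hC]; linarith
    calc ‖A ^ n‖ = (‖A ^ n‖ / (r : ℝ) ^ n) * (r : ℝ) ^ n := by field_simp
      _ ≤ C * (r : ℝ) ^ n := by gcongr

/-- An invertible bounded operator is generalized hyperbolic with respect to the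
splitting `X = M ⊕ N` if `M`, `N` are closed, `T(M) ⊆ M`, `T⁻¹(N) ⊆ N`,
`σ(T|_M) ⊆ 𝔻` and `σ(T⁻¹|_N) ⊆ 𝔻`. -/
def IsGeneralizedHyperbolic {X : Type*} [NormedAddCommGroup X] [NormedSpace ℂ X]
    [CompleteSpace X] (T : X ≃L[ℂ] X) (M N : Submodule ℂ X) : Prop :=
  IsClosed (M : Set X) ∧ IsClosed (N : Set X) ∧ IsCompl M N ∧
  (∃ hM : ∀ x ∈ M, T x ∈ M,
    spectrum ℂ (LinearMap.restrict ((T : X →L[ℂ] X) : X →ₗ[ℂ] X) hM) ⊆ Metric.ball (0 : ℂ) 1) ∧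
  (∃ hN : ∀ x ∈ N, T.symm x ∈ N,
    spectrum ℂ (LinearMap.restrict ((T.symm : X →L[ℂ] X) : X →ₗ[ℂ] X) hN) ⊆ Metric.ball (0 : ℂ) 1)

/-- For a generalized hyperbolic `T` with `Y = M + T⁻¹(N)` and any
uniform homeomorphism `R`, the map `Ψ(φ) = φ ∘ R − T ∘ φ` is a bijection from
`U_b(X;Y)` onto `U_b(X)`: every bounded uniformly continuous `α : X → X` has a
unique bounded uniformly continuous `Y`-valued preimage. -/
theorem psi_bijective
    {X : Type*} [NormedAddCommGroup X] [NormedSpace ℂ X] [CompleteSpace X]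
    (T : X ≃L[ℂ] X) (M N : Submodule ℂ X)
    (hGH : IsGeneralizedHyperbolic T M N)
    (Y : Submodule ℂ X)
    (hY : Y = M ⊔ N.comap ((T : X →L[ℂ] X) : X →ₗ[ℂ] X))
    (R : X ≃ X) (hR : UniformContinuous ⇑R) (hR' : UniformContinuous ⇑R.symm) :
    ∀ α : X → X, UniformContinuous α → (∃ C, ∀ x, ‖α x‖ ≤ C) →
      ∃! φ : X → X,
        (UniformContinuous φ ∧ (∃ C, ∀ x, ‖φ x‖ ≤ C) ∧ (∀ x, φ x ∈ Y)) ∧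
        ∀ x, φ (R x) - T (φ x) = α x := by
  rintro α hα ⟨Cα, hCα⟩
  obtain ⟨hMc, hNc, hcompl, ⟨hM, hTM⟩, ⟨hN, hTN⟩⟩ := hGH
  haveI : CompleteSpace M := hMc.completeSpace_coe
  haveI : CompleteSpace N := hNc.completeSpace_coe
  -- continuous projections
  set PM : X →L[ℂ] M := M.linearProjOfClosedCompl N hcompl hMc hNc with hPM
  set PN : X →L[ℂ] N := N.linearProjOfClosedCompl M hcompl.symm hNc hMc with hPN
  have hprojsum : ∀ x : X, ((PM x : X)) + ((PN x : X)) = x := by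
    intro x
    exact Submodule.projection_add_projection_eq_self hcompl x
  have hPMleft : ∀ (m : X), m ∈ M → (PM m : X) = m := by
    intro m hm
    exact congrArg (Subtype.val)
      (Submodule.projectionOnto_apply_left hcompl ⟨m, hm⟩)
  have hPMright : ∀ (n : X), n ∈ N → (PM n : X) = 0 := by
    intro n hn
    exact congrArg (Subtype.val)
      (Submodule.projectionOnto_apply_right hcompl ⟨n, hn⟩)
  have hPNleft : ∀ (n : X), n ∈ N → (PN n : X) = n := by
    intro n hn
    exact congrArg (Subtype.val)
      (Submodule.projectionOnto_apply_left hcompl.symm ⟨n, hn⟩)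
  have hPNright : ∀ (m : X), m ∈ M → (PN m : X) = 0 := by
    intro m hm
    exact congrArg (Subtype.val)
      (Submodule.projectionOnto_apply_right hcompl.symm ⟨m, hm⟩)
  have hproj : ∀ (w m n' : X), m ∈ M → n' ∈ N → w = m + n' →
      (PM w : X) = m ∧ (PN w : X) = n' := by
    rintro w m n' hm hn rfl
    constructor
    · rw [map_add]
      push_cast
      rw [hPMleft m hm, hPMright n' hn, add_zero]
    · rw [map_add]
      push_cast
      rw [hPNleft n' hn, hPNright m hm, zero_add]
  -- restricted operators
  set TM : M →L[ℂ] M := clmRestrict (T : X →L[ℂ] X) M hM with hTMdef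
  set SN : N →L[ℂ] N := clmRestrict (T.symm : X →L[ℂ] X) N hN with hSNdef
  have hTMs : spectrum ℂ TM ⊆ Metric.ball (0 : ℂ) 1 :=
    fun z hz => hTM (spectrum_clm_subset_end TM hz)
  have hSNs : spectrum ℂ SN ⊆ Metric.ball (0 : ℂ) 1 :=
    fun z hz => hTN (spectrum_clm_subset_end SN hz)
  obtain ⟨C₁, r₁, hC₁, hr₁0, hr₁1, hb₁⟩ := exists_geom_bound TM hTMs
  obtain ⟨C₂, r₂, hC₂, hr₂0, hr₂1, hb₂⟩ := exists_geom_bound SN hSNs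
  have hCα0 : 0 ≤ Cα := le_trans (norm_nonneg (α 0)) (hCα 0)
  -- the two series solutions
  obtain ⟨f₁, hf₁U, ⟨B₁, hB₁⟩, hf₁eq, -⟩ :=
    series_solution TM hC₁ hr₁0 hr₁1 hb₁ (⇑R.symm) hR' (fun x => PM (α x))
      (PM.uniformContinuous.comp hα) (Cβ := ‖PM‖ * Cα) (by positivity)
      (fun x => le_trans (PM.le_opNorm _) (mul_le_mul_of_nonneg_left (hCα x) (norm_nonneg _)))
  obtain ⟨f₂, hf₂U, ⟨B₂, hB₂⟩, hf₂eq, -⟩ :=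
    series_solution SN hC₂ hr₂0 hr₂1 hb₂ (⇑R) hR (fun x => PN (α x))
      (PN.uniformContinuous.comp hα) (Cβ := ‖PN‖ * Cα) (by positivity)
      (fun x => le_trans (PN.le_opNorm _) (mul_le_mul_of_nonneg_left (hCα x) (norm_nonneg _)))
  -- the solution
  set φ : X → X := fun x => ((f₁ (R.symm x) : X)) - T.symm ((f₂ x : X)) with hφdef
  have hf₁coe : ∀ x : X, ((f₁ x : X)) = ((PM (α x) : X)) + T ((f₁ (R.symm x) : X)) := by
    intro x
    have := congrArg (Subtype.val) (hf₁eq x)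
    push_cast at this
    rw [this]
    simp [hTMdef]
    rfl
  have hf₂coe : ∀ x : X, ((f₂ x : X)) = ((PN (α x) : X)) + T.symm ((f₂ (R x) : X)) := by
    intro x
    have := congrArg (Subtype.val) (hf₂eq x)
    push_cast at this
    rw [this]
    simp [hSNdef]
    rfl
  have hφeq : ∀ x, φ (R x) - T (φ x) = α x := by
    intro x
    have h1 : φ (R x) = ((f₁ x : X)) - T.symm ((f₂ (R x) : X)) := by
      simp [hφdef, R.symm_apply_apply]
    have h2 : T (φ x) = T ((f₁ (R.symm x) : X)) - ((f₂ x : X)) := by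
      rw [hφdef]
      simp only [map_sub]
      rw [T.apply_symm_apply]
    rw [h1, h2, hf₁coe x, hf₂coe x]
    have := hprojsum (α x)
    abel_nf
    linear_combination (norm := abel) this
  -- uniform continuity, boundedness, membership of φ
  have hφU : UniformContinuous φ := by
    refine UniformContinuous.sub ?_ ?_
    · exact uniformContinuous_subtype_val.comp (hf₁U.comp hR')
    · exact (T.symm : X →L[ℂ] X).uniformContinuous.comp
        (uniformContinuous_subtype_val.comp hf₂U)
  have hφB : ∀ x, ‖φ x‖ ≤ B₁ + ‖(T.symm : X →L[ℂ] X)‖ * B₂ := by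
    intro x
    have h1 : ‖((f₁ (R.symm x) : X))‖ ≤ B₁ := hB₁ _
    have h2 : ‖T.symm ((f₂ x : X))‖ ≤ ‖(T.symm : X →L[ℂ] X)‖ * B₂ := by
      refine le_trans ((T.symm : X →L[ℂ] X).le_opNorm _) ?_
      exact mul_le_mul_of_nonneg_left (hB₂ _) (norm_nonneg _)
    calc ‖φ x‖ ≤ ‖((f₁ (R.symm x) : X))‖ + ‖T.symm ((f₂ x : X))‖ := norm_sub_le _ _
      _ ≤ B₁ + ‖(T.symm : X →L[ℂ] X)‖ * B₂ := add_le_add h1 h2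
  have hcomapmem : ∀ v : X, T v ∈ N → v ∈ N.comap ((T : X →L[ℂ] X) : X →ₗ[ℂ] X) := by
    intro v hv
    simpa using hv
  have hφY : ∀ x, φ x ∈ Y := by
    intro x
    rw [hY, hφdef]
    refine Submodule.sub_mem _ ?_ ?_
    · exact Submodule.mem_sup_left (f₁ (R.symm x)).2
    · refine Submodule.mem_sup_right (hcomapmem _ ?_)
      rw [T.apply_symm_apply]
      exact (f₂ x).2
  refine ⟨φ, ⟨⟨hφU, ⟨B₁ + ‖(T.symm : X →L[ℂ] X)‖ * B₂, hφB⟩, hφY⟩, hφeq⟩, ?_⟩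
  -- uniqueness
  rintro φ' ⟨⟨hφ'U, ⟨Cφ', hCφ'⟩, hφ'Y⟩, hφ'eq⟩
  set g : X → X := fun x => φ' x - φ x with hgdef
  have hgY : ∀ x, g x ∈ Y := fun x => Submodule.sub_mem _ (hφ'Y x) (hφY x)
  have hgB : ∀ x, ‖g x‖ ≤ Cφ' + (B₁ + ‖(T.symm : X →L[ℂ] X)‖ * B₂) :=
    fun x => le_trans (norm_sub_le _ _) (add_le_add (hCφ' x) (hφB x))
  have hgrec : ∀ x, g (R x) = T (g x) := by
    intro x
    have h0 : g (R x) - T (g x) = 0 := by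
      have e : (φ' (R x) - φ (R x)) - (T (φ' x) - T (φ x)) =
          (φ' (R x) - T (φ' x)) - (φ (R x) - T (φ x)) := by abel
      rw [hgdef]
      simp only [map_sub]
      rw [e, hφ'eq x, hφeq x, sub_self]
    exact sub_eq_zero.1 h0
  -- decompose g
  have hdecomp : ∀ x, (PM (g x) : X) ∈ M ∧ (PN (g x) : X) ∈ N ∧
      T ((PN (g x) : X)) ∈ N := by
    intro x
    obtain ⟨u, hu, v, hv, huv⟩ := Submodule.mem_sup.1 (hY ▸ hgY x)
    have hvT : T v ∈ N := by simpa using hv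
    have hvN : v ∈ N := by
      have := hN (T v) hvT
      rwa [T.symm_apply_apply] at this
    obtain ⟨e1, e2⟩ := hproj (g x) u v hu hvN huv.symm
    refine ⟨(PM (g x)).2, (PN (g x)).2, ?_⟩
    rw [e2]
    exact hvT
  have hkey : ∀ x, (PM (g (R x)) : X) = T ((PM (g x) : X)) ∧
      (PN (g (R x)) : X) = T ((PN (g x) : X)) := by
    intro x
    have hTu : T ((PM (g x) : X)) ∈ M := hM _ (PM (g x)).2
    have hTv : T ((PN (g x) : X)) ∈ N := (hdecomp x).2.2
    have hsum : g (R x) = T ((PM (g x) : X)) + T ((PN (g x) : X)) := by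
      rw [hgrec x, ← map_add]
      rw [hprojsum (g x)]
    exact hproj _ _ _ hTu hTv hsum
  -- M component vanishes
  set mfun : X → M := fun x => PM (g x) with hmfun
  set nfun : X → N := fun x => PN (g x) with hnfun
  have hmrec : ∀ x, mfun x = TM (mfun (R.symm x)) := by
    intro x
    have := (hkey (R.symm x)).1
    rw [R.apply_symm_apply] at this
    apply Subtype.ext
    rw [this]
    simp [hTMdef, hmfun]
    rfl
  have hnrec : ∀ x, nfun x = SN (nfun (R x)) := by
    intro x
    have := (hkey x).2
    apply Subtype.ext
    have h2 : (SN (nfun (R x)) : X) = T.symm ((PN (g (R x)) : X)) := by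
      simp [hSNdef, hnfun]
      rfl
    rw [h2, this, T.symm_apply_apply]
  have hmB : ∀ x, ‖mfun x‖ ≤ ‖PM‖ * (Cφ' + (B₁ + ‖(T.symm : X →L[ℂ] X)‖ * B₂)) := by
    intro x
    refine le_trans (PM.le_opNorm _) ?_
    exact mul_le_mul_of_nonneg_left (hgB x) (norm_nonneg _)
  have hnB : ∀ x, ‖nfun x‖ ≤ ‖PN‖ * (Cφ' + (B₁ + ‖(T.symm : X →L[ℂ] X)‖ * B₂)) := by
    intro x
    refine le_trans (PN.le_opNorm _) ?_
    exact mul_le_mul_of_nonneg_left (hgB x) (norm_nonneg _)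
  have hm0 : ∀ x, mfun x = 0 := decay_unique TM hr₁0 hr₁1 hb₁ (⇑R.symm) mfun hmB hmrec
  have hn0 : ∀ x, nfun x = 0 := decay_unique SN hr₂0 hr₂1 hb₂ (⇑R) nfun hnB hnrec
  funext x
  have hg0 : g x = 0 := by
    have := hprojsum (g x)
    rw [show PM (g x) = mfun x from rfl, show PN (g x) = nfun x from rfl] at this
    rw [hm0 x, hn0 x] at this
    simpa using this.symm
  have := sub_eq_zero.1 hg0
  exact this
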